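/- Let m ≥ 3 be a natural number, let A be a finite set with a strict linear order <, and let B be a weakly (m−1)-wise balanced design over A. Then the graph Γ_{B,m} contains no clique of size m (it is K_m-free). -/

import Mathlib

open Finset

/-- `B` is a weakly `m`-wise balanced design over the finite set `A`:
every block is a nonempty subset of `A`, every point of `A` lies in at least
one block, and any `m` pairwise distinct points of `A` are contained together
in at most one block. -/
def IsWeaklyBalancedDesign {α : Type*} [DecidableEq α] (m : ℕ)
    (A : Finset α) (B : Finset (Finset α)) : Prop :=
  (∀ C ∈ B, C ⊆ A) ∧
  (∀ C ∈ B, C.Nonempty) ∧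
  (∀ x ∈ A, ∃ C ∈ B, x ∈ C) ∧
  (∀ S : Finset α, S ⊆ A → S.card = m → (B.filter fun C => S ⊆ C).card ≤ 1)

/-- The vertex set of `Γ_{B,m}`: all incidence pairs `(x, C)` with `x ∈ C ∈ B`. -/
def designVerts {α : Type*} [DecidableEq α] (B : Finset (Finset α)) :
    Finset (α × Finset α) :=
  B.biUnion fun C => C.image fun x => (x, C)

/-- The graph `Γ_{B,m}` on incidence pairs: `(x, C₁)` and `(y, C₂)` are adjacent
iff `x < y`, `C₁ ≠ C₂` and `x ∈ C₂`, or symmetrically `y < x`, `C₂ ≠ C₁` and `y ∈ C₁`. -/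
def designGraph {α : Type*} [inst : LinearOrder α] (B : Finset (Finset α)) :
    SimpleGraph (designVerts (α := α) B) where
  Adj u v :=
    (u.val.1 < v.val.1 ∧ u.val.2 ≠ v.val.2 ∧ u.val.1 ∈ v.val.2) ∨
    (v.val.1 < u.val.1 ∧ v.val.2 ≠ u.val.2 ∧ v.val.1 ∈ u.val.2)
  symm := ⟨fun u v h => by tauto⟩
  loopless := ⟨fun u h => by
    rcases h with ⟨h, _, _⟩ | ⟨h, _, _⟩ <;> exact lt_irrefl _ h⟩

/-- The independence number of a graph: the largest size of an independent set of vertices. -/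
noncomputable def indepNum {V : Type*} (G : SimpleGraph V) : ℕ :=
  sSup {n | ∃ s : Finset V, s.card = n ∧ ∀ x ∈ s, ∀ y ∈ s, ¬ G.Adj x y}

/-- Let `m ≥ 3`, let `A` be a finite set with a strict linear order and let `B` be a
weakly `(m-1)`-wise balanced design over `A`. Then `Γ_{B,m}` contains no clique of size `m`. -/
theorem designGraph_cliqueFree {α : Type*} [LinearOrder α] (m : ℕ) (hm : 3 ≤ m)
    (A : Finset α) (B : Finset (Finset α))
    (hB : IsWeaklyBalancedDesign (m - 1) A B) :
    (designGraph B).CliqueFree m := by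
  have hvert : ∀ v : designVerts (α := α) B, v.val.2 ∈ B ∧ v.val.1 ∈ v.val.2 := by
    rintro ⟨⟨x, C⟩, hv⟩
    simp only [designVerts, Finset.mem_biUnion, Finset.mem_image, Prod.mk.injEq] at hv
    obtain ⟨C', hC', x', hx', h1, h2⟩ := hv
    subst h1; subst h2; exact ⟨hC', hx'⟩
  intro s hs
  obtain ⟨hclq, hcard⟩ := hs
  have hinj : Set.InjOn (fun v : designVerts (α := α) B => v.val.1) s := by
    intro u hu v hv h
    by_contra hne
    rcases hclq hu hv hne with ⟨h1, _, _⟩ | ⟨h1, _, _⟩ <;>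
      simp only [h] at h1 <;> exact lt_irrefl _ h1
  set t := s.image (fun v : designVerts (α := α) B => v.val.1) with ht
  have htcard : t.card = m := by rw [ht, Finset.card_image_of_injOn hinj, hcard]
  have htne : t.Nonempty := Finset.card_pos.mp (by omega)
  set y := t.max' htne with hy
  obtain ⟨vM, hvM, hvMy⟩ := Finset.mem_image.mp (t.max'_mem htne)
  set S := t.erase y with hS
  have hScard : S.card = m - 1 := by
    rw [hS, Finset.card_erase_of_mem (t.max'_mem htne), htcard]
  have hSne : S.Nonempty := Finset.card_pos.mp (by omega)
  set y' := S.max' hSne with hy'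
  have hy'S : y' ∈ S := S.max'_mem hSne
  have hy'lt : y' < y := by
    have := Finset.mem_erase.mp hy'S
    exact lt_of_le_of_ne (t.le_max' _ this.2) this.1
  obtain ⟨v', hv', hv'y⟩ := Finset.mem_image.mp (Finset.mem_of_mem_erase hy'S)
  -- adjacency facts for points in S with vM and v'
  have hSinCM : ∀ x ∈ S, x ∈ vM.val.2 := by
    intro x hxS
    obtain ⟨u, hu, hux⟩ := Finset.mem_image.mp (Finset.mem_of_mem_erase hxS)
    have hxne : x ≠ y := (Finset.mem_erase.mp hxS).1
    have hxlt : x < y := lt_of_le_of_ne (t.le_max' _ (Finset.mem_of_mem_erase hxS)) hxne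
    have hne : u ≠ vM := by
      intro h; rw [h, hvMy] at hux; exact hxne hux.symm
    rcases hclq hu hvM hne with ⟨_, _, h3⟩ | ⟨h1, _, _⟩
    · rwa [hux] at h3
    · rw [hux, hvMy] at h1; exact absurd h1 (not_lt.mpr hxlt.le)
  have hSinC' : ∀ x ∈ S, x ∈ v'.val.2 := by
    intro x hxS
    obtain ⟨u, hu, hux⟩ := Finset.mem_image.mp (Finset.mem_of_mem_erase hxS)
    by_cases hxy' : x = y'
    · rw [hxy', ← hv'y]; exact (hvert v').2
    · have hxlt : x < y' := lt_of_le_of_ne (S.le_max' _ hxS) hxy'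
      have hne : u ≠ v' := by
        intro h; rw [h, hv'y] at hux; exact hxy' hux.symm
      rcases hclq hu hv' hne with ⟨_, _, h3⟩ | ⟨h1, _, _⟩
      · rwa [hux] at h3
      · rw [hux, hv'y] at h1; exact absurd h1 (not_lt.mpr hxlt.le)
  -- vM and v' are adjacent, giving distinct blocks
  have hMne : v' ≠ vM := by
    intro h; rw [h, hvMy] at hv'y; exact absurd hv'y.symm (ne_of_lt hy'lt)
  have hCne : v'.val.2 ≠ vM.val.2 := by
    rcases hclq hv' hvM hMne with ⟨_, h2, _⟩ | ⟨h1, _, _⟩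
    · exact h2
    · rw [hvMy, hv'y] at h1; exact absurd h1 (not_lt.mpr hy'lt.le)
  -- both blocks contain S, contradicting the design property
  have hCMB := (hvert vM).1
  have hC'B := (hvert v').1
  have hSA : S ⊆ A := fun x hx => hB.1 _ hCMB (hSinCM x hx)
  have hfilter := hB.2.2.2 S hSA hScard
  have hmem1 : vM.val.2 ∈ B.filter (fun C => S ⊆ C) :=
    Finset.mem_filter.mpr ⟨hCMB, fun x hx => hSinCM x hx⟩
  have hmem2 : v'.val.2 ∈ B.filter (fun C => S ⊆ C) :=
    Finset.mem_filter.mpr ⟨hC'B, fun x hx => hSinC' x hx⟩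
  have : ({v'.val.2, vM.val.2} : Finset (Finset α)) ⊆ B.filter (fun C => S ⊆ C) := by
    intro C hC
    rcases Finset.mem_insert.mp hC with h | h
    · rw [h]; exact hmem2
    · rw [Finset.mem_singleton.mp h]; exact hmem1
  have h2 : 2 ≤ (B.filter (fun C => S ⊆ C)).card := by
    calc 2 = ({v'.val.2, vM.val.2} : Finset (Finset α)).card := by
          rw [Finset.card_insert_of_notMem (by simpa using hCne), Finset.card_singleton]
      _ ≤ _ := Finset.card_le_card this
  omega
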